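/- Let k, ℓ be integers ≥ 1 and multi-indices α, β. There exists C = C(α, β, k, ℓ, n) > 0 such that for all x, ξ ∈ ℝⁿ: |∂_x^β ∂_ξ^α (|x|^(2k) + |ξ|^(2ℓ))| ≤ C (1 + |x|^(2k) + |ξ|^(2ℓ))^(1 − |β|/(2k) − |α|/(2ℓ)). -/

import Mathlib

open MvPolynomial

namespace AnharmonicAux

variable {σ τ τ' : Type*}

lemma totalDegree_pderiv_le [DecidableEq σ] (i : σ) (f : MvPolynomial σ ℝ) :
    (pderiv i f).totalDegree ≤ f.totalDegree - 1 := by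
  conv_lhs => rw [f.as_sum]
  rw [map_sum]
  apply totalDegree_finsetSum_le
  intro v hv
  rw [pderiv_monomial]
  rcases Nat.eq_zero_or_pos (v i) with h | h
  · simp [h]
  · refine (totalDegree_monomial_le _ _).trans ?_
    have hle : Finsupp.single i 1 ≤ v := by
      rw [Finsupp.single_le_iff]; exact h
    have hsum : (v - Finsupp.single i 1).sum (fun _ e => e) + 1 = v.sum fun _ e => e := by
      conv_rhs => rw [← tsub_add_cancel_of_le hle]
      rw [Finsupp.sum_add_index' (fun _ => rfl) (fun _ _ _ => rfl),
        Finsupp.sum_single_index rfl]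
    have hv' : (v.sum fun _ e => e) ≤ f.totalDegree := le_totalDegree hv
    have : ((v - Finsupp.single i 1).sum fun _ ↦ id) =
        (v - Finsupp.single i 1).sum fun _ e => e := rfl
    omega

lemma pderiv_eq_zero_of_totalDegree_eq_zero [DecidableEq σ] (i : σ) (f : MvPolynomial σ ℝ)
    (h : f.totalDegree = 0) : pderiv i f = 0 := by
  rw [totalDegree_eq_zero_iff] at h
  conv_lhs => rw [f.as_sum]
  rw [map_sum]
  refine Finset.sum_eq_zero fun v hv => ?_
  have : v = 0 := Finsupp.ext fun j => h v hv j
  rw [this, monomial_zero', pderiv_C]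

/-- An endomorphism that lowers total degree by `m` and kills polynomials of degree `< m`. -/
def Good (E : Module.End ℝ (MvPolynomial σ ℝ)) (m : ℕ) : Prop :=
  ∀ f : MvPolynomial σ ℝ,
    (E f).totalDegree ≤ f.totalDegree - m ∧ (f.totalDegree < m → E f = 0)

lemma good_one : Good (1 : Module.End ℝ (MvPolynomial σ ℝ)) 0 :=
  fun f => ⟨by simp [Module.End.one_apply], by omega⟩

lemma good_mul {E F : Module.End ℝ (MvPolynomial σ ℝ)} {m m' : ℕ}
    (hE : Good E m) (hF : Good F m') : Good (E * F) (m + m') := by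
  intro f
  have h1 := (hE (F f)).1
  have h2 := (hF f).1
  constructor
  · rw [Module.End.mul_apply]; omega
  · intro h
    rcases lt_or_ge f.totalDegree m' with h' | h'
    · rw [Module.End.mul_apply, (hF f).2 h', map_zero]
    · rw [Module.End.mul_apply]
      exact (hE (F f)).2 (by omega)

lemma good_pderiv [DecidableEq σ] (i : σ) :
    Good ((pderiv (R := ℝ) i).toLinearMap : Module.End ℝ (MvPolynomial σ ℝ)) 1 :=
  fun f => ⟨totalDegree_pderiv_le i f,
    fun h => pderiv_eq_zero_of_totalDegree_eq_zero i f (by omega)⟩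

lemma good_pow {E : Module.End ℝ (MvPolynomial σ ℝ)} {m : ℕ} (hE : Good E m) :
    ∀ j : ℕ, Good (E ^ j) (j * m)
  | 0 => by simpa using good_one
  | (j + 1) => by
    have := good_mul (good_pow hE j) hE
    rw [← pow_succ] at this
    simpa [add_mul] using this

lemma good_list (l : List (Module.End ℝ (MvPolynomial σ ℝ) × ℕ))
    (h : ∀ p ∈ l, Good p.1 p.2) :
    Good (l.map Prod.fst).prod (l.map Prod.snd).sum := by
  induction l with
  | nil => simpa using good_one
  | cons a l ih =>
    simp only [List.map_cons, List.prod_cons, List.sum_cons]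
    exact good_mul (h a List.mem_cons_self) (ih fun p hp => h p (List.mem_cons_of_mem _ hp))

lemma good_ofFn {n : ℕ} {τ : Type*} [DecidableEq τ] (e : Fin n → τ) (γ : Fin n → ℕ) :
    Good ((List.ofFn fun i : Fin n =>
        ((pderiv (R := ℝ) (e i)).toLinearMap : Module.End ℝ (MvPolynomial τ ℝ)) ^ γ i).prod)
      (∑ i, γ i) := by
  have := good_list (σ := τ)
    (List.ofFn fun i : Fin n =>
      (((pderiv (R := ℝ) (e i)).toLinearMap : Module.End ℝ (MvPolynomial τ ℝ)) ^ γ i, γ i))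
    (by
      intro p hp
      rw [List.mem_ofFn] at hp
      obtain ⟨i, rfl⟩ := hp
      simpa using good_pow (good_pderiv (e i)) (γ i))
  simpa [List.map_ofFn, Function.comp_def, List.sum_ofFn] using this

lemma pderiv_rename_of_ne [DecidableEq σ] (u : τ → σ) (j : σ) (h : ∀ t, u t ≠ j)
    (p : MvPolynomial τ ℝ) : pderiv j (rename u p) = 0 := by
  classical
  apply pderiv_eq_zero_of_notMem_vars
  intro hj
  obtain ⟨t, _, ht⟩ := mem_vars_rename u p hj
  exact h t ht

lemma pow_apply_eq_zero {M : Type*} [AddCommMonoid M] [Module ℝ M]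
    {E : Module.End ℝ M} {x : M} (h : E x = 0) {m : ℕ} (hm : m ≠ 0) : (E ^ m) x = 0 := by
  obtain ⟨j, rfl⟩ := Nat.exists_eq_succ_of_ne_zero hm
  rw [pow_succ, Module.End.mul_apply, h, map_zero]

lemma pow_pderiv_rename [DecidableEq σ] {u : τ → σ} (hu : Function.Injective u)
    (i : τ) (m : ℕ) (p : MvPolynomial τ ℝ) :
    (((pderiv (R := ℝ) (u i)).toLinearMap : Module.End ℝ (MvPolynomial σ ℝ)) ^ m)
        (rename u p)
      = rename u ((((pderiv (R := ℝ) i).toLinearMap : Module.End ℝ (MvPolynomial τ ℝ)) ^ m) p) := by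
  induction m generalizing p with
  | zero => simp
  | succ m ih =>
    rw [pow_succ', pow_succ', Module.End.mul_apply, Module.End.mul_apply, ih p]
    exact pderiv_rename hu i _

lemma list_comm [DecidableEq σ] {u : τ → σ} (hu : Function.Injective u)
    (l : List τ) (γ : τ → ℕ) (p : MvPolynomial τ ℝ) :
    ((l.map fun i => ((pderiv (R := ℝ) (u i)).toLinearMap :
        Module.End ℝ (MvPolynomial σ ℝ)) ^ γ i).prod) (rename u p)
      = rename u (((l.map fun i => ((pderiv (R := ℝ) i).toLinearMap :
        Module.End ℝ (MvPolynomial τ ℝ)) ^ γ i).prod) p) := by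
  induction l generalizing p with
  | nil => simp
  | cons a l ih =>
    simp only [List.map_cons, List.prod_cons, Module.End.mul_apply]
    rw [ih p, pow_pderiv_rename hu]

lemma list_id (e : τ → σ) (l : List τ) (γ : τ → ℕ) (hz : ∀ i ∈ l, γ i = 0) :
    ((l.map fun i => ((pderiv (R := ℝ) (e i)).toLinearMap :
        Module.End ℝ (MvPolynomial σ ℝ)) ^ γ i).prod) = 1 := by
  apply List.prod_eq_one
  intro x hx
  rw [List.mem_map] at hx
  obtain ⟨i, hi, rfl⟩ := hx
  rw [hz i hi, pow_zero]

lemma list_kill [DecidableEq σ] (u : τ' → σ) (e : τ → σ) (h : ∀ i t, e i ≠ u t)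
    (l : List τ) (γ : τ → ℕ) (p : MvPolynomial τ' ℝ) (hne : ∃ i ∈ l, γ i ≠ 0) :
    ((l.map fun i => ((pderiv (R := ℝ) (e i)).toLinearMap :
        Module.End ℝ (MvPolynomial σ ℝ)) ^ γ i).prod) (rename u p) = 0 := by
  classical
  induction l with
  | nil => simp at hne
  | cons a l ih =>
    simp only [List.map_cons, List.prod_cons, Module.End.mul_apply]
    by_cases hl : ∃ i ∈ l, γ i ≠ 0
    · rw [ih hl, map_zero]
    · push_neg at hl
      rw [list_id e l γ hl, Module.End.one_apply]
      have ha : γ a ≠ 0 := by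
        obtain ⟨i, hi, hgi⟩ := hne
        rcases List.mem_cons.1 hi with rfl | hi'
        · exact hgi
        · exact absurd (hl i hi') hgi
      exact pow_apply_eq_zero (pderiv_rename_of_ne u (e a) (fun t => (h a t).symm) p) ha

lemma eval_abs_le {σ : Type*} [Fintype σ] (f : MvPolynomial σ ℝ) :
    ∃ C > (0 : ℝ), ∀ x : σ → ℝ,
      |eval x f| ≤ C * Real.sqrt (1 + ∑ i, x i ^ 2) ^ f.totalDegree := by
  refine ⟨(∑ v ∈ f.support, |coeff v f|) + 1, by positivity, fun x => ?_⟩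
  set s := Real.sqrt (1 + ∑ i, x i ^ 2) with hs
  have hsum_nonneg : (0 : ℝ) ≤ ∑ i, x i ^ 2 := Finset.sum_nonneg fun i _ => sq_nonneg _
  have hs1 : (1 : ℝ) ≤ s := by
    rw [hs, Real.one_le_sqrt]
    linarith
  have hs0 : (0 : ℝ) ≤ s := by linarith
  have hx : ∀ i, |x i| ≤ s := by
    intro i
    rw [← Real.sqrt_sq_eq_abs, hs]
    apply Real.sqrt_le_sqrt
    have : x i ^ 2 ≤ ∑ j, x j ^ 2 :=
      Finset.single_le_sum (fun j _ => sq_nonneg (x j)) (Finset.mem_univ i)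
    linarith
  rw [eval_eq]
  calc |∑ d ∈ f.support, coeff d f * ∏ i ∈ d.support, x i ^ d i|
      ≤ ∑ d ∈ f.support, |coeff d f * ∏ i ∈ d.support, x i ^ d i| :=
        Finset.abs_sum_le_sum_abs _ _
    _ ≤ ∑ d ∈ f.support, |coeff d f| * s ^ f.totalDegree := by
        apply Finset.sum_le_sum
        intro d hd
        rw [abs_mul]
        apply mul_le_mul_of_nonneg_left _ (abs_nonneg _)
        calc |∏ i ∈ d.support, x i ^ d i|
            ≤ ∏ i ∈ d.support, s ^ d i := by
              rw [Finset.abs_prod]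
              apply Finset.prod_le_prod (fun i _ => abs_nonneg _)
              intro i _
              rw [abs_pow]
              exact pow_le_pow_left₀ (abs_nonneg _) (hx i) _
          _ = s ^ (d.sum fun _ e => e) := by
              rw [Finset.prod_pow_eq_pow_sum]; rfl
          _ ≤ s ^ f.totalDegree := pow_le_pow_right₀ hs1 (le_totalDegree hd)
    _ = (∑ v ∈ f.support, |coeff v f|) * s ^ f.totalDegree := by rw [Finset.sum_mul]
    _ ≤ ((∑ v ∈ f.support, |coeff v f|) + 1) * s ^ f.totalDegree := by
        apply mul_le_mul_of_nonneg_right (by linarith) (pow_nonneg hs0 _)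

lemma sqrt_pow_le_rpow {S : ℝ} (hS : 1 ≤ S) {d : ℕ} {t : ℝ} (h : (d : ℝ) ≤ 2 * t) :
    Real.sqrt S ^ d ≤ S ^ t := by
  have hS0 : (0 : ℝ) ≤ S := by linarith
  have h1 : Real.sqrt S ^ d = S ^ ((d : ℝ) / 2) := by
    rw [Real.sqrt_eq_rpow, ← Real.rpow_natCast (S ^ ((1 : ℝ) / 2)) d, ← Real.rpow_mul hS0]
    ring_nf
  rw [h1]
  exact Real.rpow_le_rpow_of_exponent_le hS (by linarith)

/-- The core one-sided estimate. -/
lemma core (n k : ℕ) (hk : 1 ≤ k) (γ : Fin n → ℕ) :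
    ∃ C > (0 : ℝ), ∀ (x : Fin n → ℝ) (extra : ℝ), 0 ≤ extra →
      |eval x (((List.ofFn fun i : Fin n =>
          ((pderiv (R := ℝ) i).toLinearMap : Module.End ℝ (MvPolynomial (Fin n) ℝ)) ^ γ i).prod)
          ((∑ i : Fin n, X i ^ 2) ^ k))|
        ≤ C * (1 + (∑ i, x i ^ 2) ^ k + extra) ^
            ((1 : ℝ) - (∑ i, γ i : ℝ) / (2 * (k : ℝ))) := by
  classical
  set D := (List.ofFn fun i : Fin n =>
    ((pderiv (R := ℝ) i).toLinearMap : Module.End ℝ (MvPolynomial (Fin n) ℝ)) ^ γ i).prod with hD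
  set q : MvPolynomial (Fin n) ℝ := (∑ i : Fin n, X i ^ 2) ^ k with hq
  have hcast : (∑ i, (γ i : ℝ)) = ((∑ i, γ i : ℕ) : ℝ) := by push_cast; rfl
  set m : ℕ := ∑ i, γ i with hm
  have hgood : Good D m := good_ofFn (fun i => i) γ
  have htdq : q.totalDegree ≤ 2 * k := by
    refine (totalDegree_pow _ _).trans ?_
    have h2 : (∑ i : Fin n, (X i : MvPolynomial (Fin n) ℝ) ^ 2).totalDegree ≤ 2 :=
      totalDegree_finsetSum_le fun i _ => (totalDegree_X_pow _ _).le
    have := Nat.mul_le_mul_left k h2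
    omega
  have hk0 : (0 : ℝ) < (k : ℝ) := by exact_mod_cast hk
  by_cases hcase : 2 * k < m
  · refine ⟨1, one_pos, fun x extra he => ?_⟩
    rw [(hgood q).2 (lt_of_le_of_lt htdq hcase), map_zero, abs_zero, one_mul]
    have hu0 : (0 : ℝ) ≤ ∑ i, x i ^ 2 := Finset.sum_nonneg fun i _ => sq_nonneg _
    have hT : (0 : ℝ) < 1 + (∑ i, x i ^ 2) ^ k + extra := by
      have : (0 : ℝ) ≤ (∑ i, x i ^ 2) ^ k := pow_nonneg hu0 k
      linarith
    exact (Real.rpow_pos_of_pos hT _).le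
  · push_neg at hcase
    obtain ⟨C₀, hC₀, hbound⟩ := eval_abs_le (D q)
    refine ⟨C₀ * 2 ^ k, by positivity, fun x extra he => ?_⟩
    have htdD : (D q).totalDegree ≤ 2 * k - m := le_trans (hgood q).1 (by omega)
    have hu0 : (0 : ℝ) ≤ ∑ i, x i ^ 2 := Finset.sum_nonneg fun i _ => sq_nonneg _
    set u : ℝ := ∑ i, x i ^ 2 with hu
    set S : ℝ := 1 + u with hS
    have hS1 : (1 : ℝ) ≤ S := by rw [hS]; linarith
    have huk : (0 : ℝ) ≤ u ^ k := pow_nonneg hu0 k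
    set T : ℝ := 1 + u ^ k + extra with hT
    have hT1 : (1 : ℝ) ≤ T := by rw [hT]; linarith
    set e : ℝ := 1 - (m : ℝ) / (2 * k) with he'
    have hmle : (m : ℝ) ≤ 2 * (k : ℝ) := by exact_mod_cast hcase
    have he0 : 0 ≤ e := by
      rw [he']
      have : (m : ℝ) / (2 * k) ≤ 1 := by
        rw [div_le_one (by positivity)]; exact hmle
      linarith
    have he1 : e ≤ 1 := by
      rw [he']
      have : 0 ≤ (m : ℝ) / (2 * k) := by positivity
      linarith
    have hke : 2 * ((k : ℝ) * e) = 2 * (k : ℝ) - (m : ℝ) := by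
      rw [he']; field_simp
    have step1 : |eval x (D q)| ≤ C₀ * S ^ ((k : ℝ) * e) := by
      refine (hbound x).trans (mul_le_mul_of_nonneg_left ?_ hC₀.le)
      apply sqrt_pow_le_rpow hS1
      have h1 : ((D q).totalDegree : ℝ) ≤ ((2 * k - m : ℕ) : ℝ) := by exact_mod_cast htdD
      have h2 : ((2 * k - m : ℕ) : ℝ) = 2 * (k : ℝ) - (m : ℝ) := by
        rw [Nat.cast_sub hcase]; push_cast; ring
      rw [hke]
      exact h1.trans_eq h2
    have hS0 : (0 : ℝ) ≤ S := by linarith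
    have step2 : S ^ ((k : ℝ) * e) ≤ 2 ^ k * T ^ e := by
      have hSk : S ^ (k : ℝ) ≤ 2 ^ k * T := by
        rw [Real.rpow_natCast]
        have h3 : S ^ k ≤ 2 ^ (k - 1) * (1 ^ k + u ^ k) := by
          rw [hS]; exact add_pow_le zero_le_one hu0 k
        have h4 : (2 : ℝ) ^ (k - 1) ≤ 2 ^ k := pow_le_pow_right₀ one_le_two (Nat.sub_le k 1)
        have h5 : (1 : ℝ) ^ k + u ^ k ≤ T := by rw [one_pow, hT]; linarith
        calc S ^ k ≤ 2 ^ (k - 1) * (1 ^ k + u ^ k) := h3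
          _ ≤ 2 ^ k * T := by
              apply mul_le_mul h4 h5 (by positivity) (by positivity)
      calc S ^ ((k : ℝ) * e) = (S ^ (k : ℝ)) ^ e := by
            rw [← Real.rpow_mul hS0]
        _ ≤ (2 ^ k * T) ^ e := Real.rpow_le_rpow (Real.rpow_nonneg hS0 _) hSk he0
        _ = ((2 : ℝ) ^ k) ^ e * T ^ e := Real.mul_rpow (by positivity) (by linarith)
        _ ≤ 2 ^ k * T ^ e := by
            apply mul_le_mul_of_nonneg_right _ (Real.rpow_nonneg (by linarith) e)
            calc ((2 : ℝ) ^ k) ^ e ≤ ((2 : ℝ) ^ k) ^ (1 : ℝ) :=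
                  Real.rpow_le_rpow_of_exponent_le (one_le_pow₀ one_le_two) he1
              _ = 2 ^ k := Real.rpow_one _
    have hEe : (1 : ℝ) - (∑ i, (γ i : ℝ)) / (2 * (k : ℝ)) = e := by
      rw [he', hcast]
    rw [hEe]
    calc |eval x (D q)| ≤ C₀ * S ^ ((k : ℝ) * e) := step1
      _ ≤ C₀ * (2 ^ k * T ^ e) := mul_le_mul_of_nonneg_left step2 hC₀.le
      _ = C₀ * 2 ^ k * T ^ e := by ring

end AnharmonicAux

/-- The mixed multi-index partial derivative `∂_x^β ∂_ξ^α` acting on polynomials in the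
variables `(x, ξ) ∈ ℝⁿ × ℝⁿ` (the `x`-variables are indexed by `Sum.inl`, the
`ξ`-variables by `Sum.inr`). -/
noncomputable def multiPDeriv (n : ℕ) (β α : Fin n → ℕ) :
    Module.End ℝ (MvPolynomial (Fin n ⊕ Fin n) ℝ) :=
  (List.ofFn fun i : Fin n =>
      ((pderiv (R := ℝ) (Sum.inl i : Fin n ⊕ Fin n)).toLinearMap ^ β i)).prod *
  (List.ofFn fun i : Fin n =>
      ((pderiv (R := ℝ) (Sum.inr i : Fin n ⊕ Fin n)).toLinearMap ^ α i)).prod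

/-- Symbol estimate: `|∂_x^β ∂_ξ^α (|x|^(2k) + |ξ|^(2ℓ))|
  ≤ C (1 + |x|^(2k) + |ξ|^(2ℓ))^(1 - |β|/(2k) - |α|/(2ℓ))`. -/
theorem anharmonic_symbol_class (n k ℓ : ℕ) (hn : 1 ≤ n) (hk : 1 ≤ k) (hl : 1 ≤ ℓ)
    (β α : Fin n → ℕ) :
    ∃ C > (0 : ℝ), ∀ x ξ : Fin n → ℝ,
      |eval (Sum.elim x ξ)
          (multiPDeriv n β α
            ((∑ i : Fin n, X (Sum.inl i : Fin n ⊕ Fin n) ^ 2) ^ k +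
              (∑ i : Fin n, X (Sum.inr i : Fin n ⊕ Fin n) ^ 2) ^ ℓ))|
        ≤ C * (1 + (∑ i, x i ^ 2) ^ k + (∑ i, ξ i ^ 2) ^ ℓ) ^
            ((1 : ℝ) - (∑ i, β i : ℝ) / (2 * (k : ℝ)) - (∑ i, α i : ℝ) / (2 * (ℓ : ℝ))) := by
  classical
  set q : MvPolynomial (Fin n) ℝ := (∑ i : Fin n, X i ^ 2) ^ k with hq
  set r : MvPolynomial (Fin n) ℝ := (∑ i : Fin n, X i ^ 2) ^ ℓ with hr
  have hA : ((∑ i : Fin n, X (Sum.inl i : Fin n ⊕ Fin n) ^ 2) ^ k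
        : MvPolynomial (Fin n ⊕ Fin n) ℝ) = rename Sum.inl q := by
    rw [hq, map_pow, map_sum]; simp
  have hB : ((∑ i : Fin n, X (Sum.inr i : Fin n ⊕ Fin n) ^ 2) ^ ℓ
        : MvPolynomial (Fin n ⊕ Fin n) ℝ) = rename Sum.inr r := by
    rw [hr, map_pow, map_sum]; simp
  set Dβ : Module.End ℝ (MvPolynomial (Fin n ⊕ Fin n) ℝ) := (List.ofFn fun i : Fin n =>
      ((pderiv (R := ℝ) (Sum.inl i : Fin n ⊕ Fin n)).toLinearMap ^ β i)).prod with hDβ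
  set Dα : Module.End ℝ (MvPolynomial (Fin n ⊕ Fin n) ℝ) := (List.ofFn fun i : Fin n =>
      ((pderiv (R := ℝ) (Sum.inr i : Fin n ⊕ Fin n)).toLinearMap ^ α i)).prod with hDα
  have hmp : multiPDeriv n β α = Dβ * Dα := rfl
  have hcommβ : ∀ p : MvPolynomial (Fin n) ℝ, Dβ (rename Sum.inl p)
      = rename Sum.inl (((List.ofFn fun i : Fin n =>
          ((pderiv (R := ℝ) i).toLinearMap : Module.End ℝ (MvPolynomial (Fin n) ℝ)) ^ β i).prod) p) := by
    intro p
    rw [hDβ, List.ofFn_eq_map, List.ofFn_eq_map]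
    exact AnharmonicAux.list_comm Sum.inl_injective _ β p
  have hcommα : ∀ p : MvPolynomial (Fin n) ℝ, Dα (rename Sum.inr p)
      = rename Sum.inr (((List.ofFn fun i : Fin n =>
          ((pderiv (R := ℝ) i).toLinearMap : Module.End ℝ (MvPolynomial (Fin n) ℝ)) ^ α i).prod) p) := by
    intro p
    rw [hDα, List.ofFn_eq_map, List.ofFn_eq_map]
    exact AnharmonicAux.list_comm Sum.inr_injective _ α p
  have hkillβ : (¬ ∀ i, β i = 0) → ∀ p : MvPolynomial (Fin n) ℝ, Dβ (rename Sum.inr p) = 0 := by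
    intro hb p
    rw [hDβ, List.ofFn_eq_map]
    push_neg at hb
    obtain ⟨i, hi⟩ := hb
    exact AnharmonicAux.list_kill Sum.inr Sum.inl (fun i t => Sum.inl_ne_inr) _ β p
      ⟨i, List.mem_finRange i, hi⟩
  have hkillα : (¬ ∀ i, α i = 0) → ∀ p : MvPolynomial (Fin n) ℝ, Dα (rename Sum.inl p) = 0 := by
    intro ha p
    rw [hDα, List.ofFn_eq_map]
    push_neg at ha
    obtain ⟨i, hi⟩ := ha
    exact AnharmonicAux.list_kill Sum.inl Sum.inr (fun i t => Sum.inr_ne_inl) _ α p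
      ⟨i, List.mem_finRange i, hi⟩
  have hidβ : (∀ i, β i = 0) → Dβ = 1 := fun hb => by
    rw [hDβ, List.ofFn_eq_map]
    exact AnharmonicAux.list_id _ _ _ (fun i _ => hb i)
  have hidα : (∀ i, α i = 0) → Dα = 1 := fun ha => by
    rw [hDα, List.ofFn_eq_map]
    exact AnharmonicAux.list_id _ _ _ (fun i _ => ha i)
  have hevl : ∀ (x ξ : Fin n → ℝ) (p : MvPolynomial (Fin n) ℝ),
      eval (Sum.elim x ξ) (rename Sum.inl p) = eval x p := fun x ξ p => by
    rw [eval_rename, Sum.elim_comp_inl]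
  have hevr : ∀ (x ξ : Fin n → ℝ) (p : MvPolynomial (Fin n) ℝ),
      eval (Sum.elim x ξ) (rename Sum.inr p) = eval ξ p := fun x ξ p => by
    rw [eval_rename, Sum.elim_comp_inr]
  have hevq : ∀ x : Fin n → ℝ, eval x q = (∑ i, x i ^ 2) ^ k := fun x => by
    rw [hq]; simp
  have hevr' : ∀ ξ : Fin n → ℝ, eval ξ r = (∑ i, ξ i ^ 2) ^ ℓ := fun ξ => by
    rw [hr]; simp
  by_cases ha : ∀ i, α i = 0
  · have hSα : (∑ i, (α i : ℝ)) = 0 :=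
      Finset.sum_eq_zero fun i _ => by rw [ha i]; norm_num
    by_cases hb : ∀ i, β i = 0
    · -- no derivative at all
      have hSβ : (∑ i, (β i : ℝ)) = 0 :=
        Finset.sum_eq_zero fun i _ => by rw [hb i]; norm_num
      refine ⟨1, one_pos, fun x ξ => ?_⟩
      rw [hA, hB, hmp, hidβ hb, hidα ha, one_mul, Module.End.one_apply, map_add,
        hevl, hevr, hevq, hevr', hSα, hSβ]
      have hE : (1 : ℝ) - 0 / (2 * (k : ℝ)) - 0 / (2 * (ℓ : ℝ)) = 1 := by norm_num
      rw [hE, Real.rpow_one, one_mul]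
      have h1 : (0 : ℝ) ≤ (∑ i, x i ^ 2) ^ k :=
        pow_nonneg (Finset.sum_nonneg fun i _ => sq_nonneg _) k
      have h2 : (0 : ℝ) ≤ (∑ i, ξ i ^ 2) ^ ℓ :=
        pow_nonneg (Finset.sum_nonneg fun i _ => sq_nonneg _) ℓ
      rw [abs_of_nonneg (by linarith)]
      linarith
    · -- only x-derivatives
      obtain ⟨C, hC, hcore⟩ := AnharmonicAux.core n k hk β
      refine ⟨C, hC, fun x ξ => ?_⟩
      rw [hA, hB, hmp, Module.End.mul_apply, hidα ha, Module.End.one_apply, map_add,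
        hcommβ q, hkillβ hb r, add_zero, hevl]
      have hE : (1 : ℝ) - (∑ i, (β i : ℝ)) / (2 * (k : ℝ)) - (∑ i, (α i : ℝ)) / (2 * (ℓ : ℝ))
          = 1 - (∑ i, (β i : ℝ)) / (2 * (k : ℝ)) := by rw [hSα]; ring
      rw [hE]
      exact hcore x _ (by positivity)
  · by_cases hb : ∀ i, β i = 0
    · -- only ξ-derivatives
      have hSβ : (∑ i, (β i : ℝ)) = 0 :=
        Finset.sum_eq_zero fun i _ => by rw [hb i]; norm_num
      obtain ⟨C, hC, hcore⟩ := AnharmonicAux.core n ℓ hl α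
      refine ⟨C, hC, fun x ξ => ?_⟩
      rw [hA, hB, hmp, Module.End.mul_apply, map_add, hkillα ha q, hcommα r, zero_add,
        hidβ hb, Module.End.one_apply, hevr]
      have hE : (1 : ℝ) - (∑ i, (β i : ℝ)) / (2 * (k : ℝ)) - (∑ i, (α i : ℝ)) / (2 * (ℓ : ℝ))
          = 1 - (∑ i, (α i : ℝ)) / (2 * (ℓ : ℝ)) := by rw [hSβ]; ring
      have hbase : (1 + (∑ i, x i ^ 2) ^ k + (∑ i, ξ i ^ 2) ^ ℓ : ℝ)
          = 1 + (∑ i, ξ i ^ 2) ^ ℓ + (∑ i, x i ^ 2) ^ k := by ring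
      rw [hE, hbase]
      exact hcore ξ _ (by positivity)
    · -- mixed derivatives: everything vanishes
      refine ⟨1, one_pos, fun x ξ => ?_⟩
      rw [hA, hB, hmp, Module.End.mul_apply, map_add, hkillα ha q, hcommα r, zero_add,
        hkillβ hb _, map_zero, abs_zero, one_mul]
      have h1 : (0 : ℝ) ≤ (∑ i, x i ^ 2) ^ k :=
        pow_nonneg (Finset.sum_nonneg fun i _ => sq_nonneg _) k
      have h2 : (0 : ℝ) ≤ (∑ i, ξ i ^ 2) ^ ℓ :=
        pow_nonneg (Finset.sum_nonneg fun i _ => sq_nonneg _) ℓ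
      exact (Real.rpow_pos_of_pos (by linarith) _).le
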